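/- Let C be a Hermitian 2L×2L projection matrix (eigenvalues in {0,1}) with exactly L eigenvalues equal to 1, decomposed as C = D + M with D a pinching and M Hermitian. If the eigenvalues of M in nonincreasing order satisfy λ_j^↓(M) ≤ c·j^{-β+1} for all j ≥ 1 (with c > 1, β > 2), then ∑_j h(ξ_j(D)) ≤ 8c·∑_{j=1}^∞ h(min(c·j^{1-β}, 1/2)) < ∞, where h is the binary entropy and ξ_j(D) the eigenvalues of D. -/

import Mathlib

open Real Matrix Polynomial

/-- The binary Shannon entropy with base-2 logarithm (with `h 0 = h 1 = 0`). -/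
noncomputable def binEnt (x : ℝ) : ℝ :=
  -(x * Real.logb 2 x) - (1 - x) * Real.logb 2 (1 - x)

/-- The pinching of a matrix with respect to the partition of the index set
into a block `A` and its complement. -/
def pinching {n : ℕ} (C : Matrix (Fin n) (Fin n) ℂ) (A : Finset (Fin n)) :
    Matrix (Fin n) (Fin n) ℂ :=
  Matrix.of fun j k => if (j ∈ A ↔ k ∈ A) then C j k else 0

/-- `a` enumerates the eigenvalues of the Hermitian matrix `A` in nonincreasing order. -/
def IsSortedEigenvalues {n : ℕ} {A : Matrix (Fin n) (Fin n) ℂ}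
    (hA : A.IsHermitian) (a : Fin n → ℝ) : Prop :=
  Antitone a ∧ ∃ σ : Equiv.Perm (Fin n), a = hA.eigenvalues ∘ σ

lemma binEnt_eq (x : ℝ) : binEnt x = Real.binEntropy x / Real.log 2 := by
  unfold binEnt Real.binEntropy Real.logb
  rw [Real.log_inv, Real.log_inv]
  ring

lemma binEnt_nonneg {x : ℝ} (h0 : 0 ≤ x) (h1 : x ≤ 1) : 0 ≤ binEnt x := by
  rw [binEnt_eq]
  exact div_nonneg (Real.binEntropy_nonneg h0 h1) (Real.log_nonneg one_le_two)

lemma binEnt_le_one (x : ℝ) : binEnt x ≤ 1 := by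
  rw [binEnt_eq, div_le_one (Real.log_pos one_lt_two)]
  exact Real.binEntropy_le_log_two

lemma binEnt_zero : binEnt 0 = 0 := by simp [binEnt]

lemma binEnt_one_sub (x : ℝ) : binEnt (1 - x) = binEnt x := by
  rw [binEnt_eq, binEnt_eq, Real.binEntropy_one_sub]

lemma binEnt_mono {x y : ℝ} (hx : 0 ≤ x) (hxy : x ≤ y) (hy : y ≤ 1/2) : binEnt x ≤ binEnt y := by
  have h2 : (2⁻¹:ℝ) = 1/2 := by norm_num
  have hm : Real.binEntropy x ≤ Real.binEntropy y :=
    Real.binEntropy_strictMonoOn.monotoneOn ⟨hx, by rw [h2]; linarith⟩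
      ⟨by linarith, by rw [h2]; linarith⟩ hxy
  rw [binEnt_eq, binEnt_eq]
  exact div_le_div_of_nonneg_right hm (Real.log_nonneg one_le_two)

lemma binEnt_half : binEnt (1/2) = 1 := by
  rw [binEnt_eq, show (1/2:ℝ) = 2⁻¹ by norm_num, Real.binEntropy_two_inv]
  exact div_self (Real.log_ne_zero_of_pos_of_ne_one two_pos (by norm_num))

lemma one_sub_mul_log_le {y : ℝ} (hy0 : 0 < y) (hy : y ≤ 1/2) :
    (1 - y) * Real.log (1 - y)⁻¹ ≤ y := by
  have h1 : (0:ℝ) < 1 - y := by linarith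
  have h2 := Real.log_le_sub_one_of_pos (inv_pos.mpr h1)
  calc (1 - y) * Real.log (1 - y)⁻¹ ≤ (1 - y) * ((1 - y)⁻¹ - 1) := by nlinarith
  _ = y := by field_simp; ring

lemma mul_log_inv_le {y s : ℝ} (hy0 : 0 < y) (hs : 0 < s) :
    y * Real.log y⁻¹ ≤ y ^ (1 - s) / s := by
  have ht : 0 < y⁻¹ := inv_pos.mpr hy0
  have h1 : Real.log ((y⁻¹) ^ s) ≤ y⁻¹ ^ s - 1 :=
    Real.log_le_sub_one_of_pos (Real.rpow_pos_of_pos ht s)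
  rw [Real.log_rpow ht] at h1
  have h2 : Real.log y⁻¹ ≤ y⁻¹ ^ s / s := by
    rw [le_div_iff₀ hs, mul_comm]; nlinarith [Real.rpow_pos_of_pos ht s]
  calc y * Real.log y⁻¹ ≤ y * (y⁻¹ ^ s / s) := by
        apply mul_le_mul_of_nonneg_left h2 hy0.le
  _ = y ^ (1 - s) / s := by
        rw [Real.inv_rpow hy0.le, Real.rpow_sub hy0, Real.rpow_one]
        field_simp

lemma binEnt_le_rpow {y s : ℝ} (hy0 : 0 < y) (hy : y ≤ 1/2) (hs0 : 0 < s) (hs1 : s < 1) :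
    binEnt y ≤ (1 + 1/s) * y ^ (1 - s) / Real.log 2 := by
  rw [binEnt_eq, Real.binEntropy]
  apply div_le_div_of_nonneg_right ?_ (Real.log_nonneg one_le_two)
  have h3 : y ≤ y ^ (1 - s) := by
    calc y = y ^ (1:ℝ) := (Real.rpow_one y).symm
    _ ≤ y ^ (1 - s) := Real.rpow_le_rpow_of_exponent_ge hy0 (by linarith) (by linarith)
  have h4 := mul_log_inv_le hy0 hs0
  have h5 := one_sub_mul_log_le hy0 hy
  have : (1 + 1/s) * y ^ (1-s) = y ^ (1-s) + y ^ (1-s)/s := by ring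
  rw [this]
  linarith

lemma summable_binEnt {c β : ℝ} (hc : 0 < c) (hβ : 2 < β) :
    Summable (fun j : ℕ => binEnt (min (c * ((j + 1 : ℝ)) ^ (1 - β)) (1 / 2))) := by
  set s : ℝ := (β - 2) / (2 * (β - 1)) with hs
  have hb1 : (0:ℝ) < β - 1 := by linarith
  have hs0 : 0 < s := div_pos (by linarith) (by nlinarith)
  have hs1 : s < 1 := by
    rw [hs, div_lt_one (by positivity)]; linarith
  have hq : (1 - β) * (1 - s) = -(β/2) := by
    rw [hs]; field_simp; ring
  have hsum : Summable (fun j : ℕ => ((j:ℝ) + 1) ^ ((1 - β) * (1 - s))) := by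
    have h1 : Summable (fun n : ℕ => (n:ℝ) ^ ((1 - β) * (1 - s))) := by
      rw [Real.summable_nat_rpow, hq]; linarith
    have := (summable_nat_add_iff (f := fun n : ℕ => (n:ℝ) ^ ((1 - β) * (1 - s))) 1).mpr h1
    refine this.congr fun j => ?_
    push_cast; ring_nf
  refine Summable.of_nonneg_of_le (fun j => ?_) (fun j => ?_) (hsum.mul_left ((1 + 1/s) * c ^ (1-s) / Real.log 2))
  · apply binEnt_nonneg
    · have : (0:ℝ) < c * ((j:ℝ)+1) ^ (1-β) := by positivity
      exact le_min this.le (by norm_num)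
    · calc min (c * ((j:ℝ)+1) ^ (1-β)) (1/2) ≤ 1/2 := min_le_right _ _
      _ ≤ 1 := by norm_num
  · have hz0 : (0:ℝ) < c * ((j:ℝ)+1) ^ (1-β) := by positivity
    have hy0 : (0:ℝ) < min (c * ((j:ℝ)+1) ^ (1-β)) (1/2) := lt_min hz0 (by norm_num)
    have hy : min (c * ((j:ℝ)+1) ^ (1-β)) (1/2) ≤ 1/2 := min_le_right _ _
    calc binEnt (min (c * ((j:ℝ)+1) ^ (1-β)) (1/2))
        ≤ (1 + 1/s) * (min (c * ((j:ℝ)+1) ^ (1-β)) (1/2)) ^ (1-s) / Real.log 2 :=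
          binEnt_le_rpow hy0 hy hs0 hs1
      _ ≤ (1 + 1/s) * (c * ((j:ℝ)+1) ^ (1-β)) ^ (1-s) / Real.log 2 := by
          apply div_le_div_of_nonneg_right ?_ (Real.log_nonneg one_le_two)
          apply mul_le_mul_of_nonneg_left ?_ (by positivity)
          exact Real.rpow_le_rpow hy0.le (min_le_left _ _) (by linarith)
      _ = ((1 + 1/s) * c ^ (1-s) / Real.log 2) * ((j:ℝ)+1) ^ ((1-β)*(1-s)) := by
          rw [Real.mul_rpow hc.le (by positivity), ← Real.rpow_mul (by positivity)]
          ring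

lemma key_pointwise {c r x : ℝ} (hc : 1 < c) (hr0 : 0 < r) (hr1 : r ≤ 1)
    (hx0 : 0 ≤ x) (hxr : x ≤ c * r) :
    binEnt (min (2 * x^2) (1/2)) ≤ 4 * c * binEnt (min (c * r) (1/2)) := by
  rcases le_or_gt (1/2) (c*r) with h | h
  · rw [min_eq_right h, binEnt_half]
    have h1 := binEnt_le_one (min (2*x^2) (1/2))
    nlinarith
  · rw [min_eq_left h.le]
    have h2 : 2*x^2 ≤ c*r := by nlinarith
    have hb : binEnt (min (2*x^2) (1/2)) ≤ binEnt (c*r) :=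
      binEnt_mono (le_min (by positivity) (by norm_num)) ((min_le_left _ _).trans h2) h.le
    have hnn : 0 ≤ binEnt (c*r) := binEnt_nonneg (by positivity) (by linarith)
    nlinarith

variable {n : ℕ}

lemma charpoly_conj (U B V : Matrix (Fin n) (Fin n) ℂ) (hUV : U * V = 1) (hVU : V * U = 1) :
    (U * B * V).charpoly = B.charpoly := by
  have key : charmatrix (U * B * V) =
      (C : ℂ →+* ℂ[X]).mapMatrix U * charmatrix B * (C : ℂ →+* ℂ[X]).mapMatrix V := by
    unfold charmatrix
    rw [Matrix.mul_sub, Matrix.sub_mul]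
    congr 1
    · rw [mul_assoc]
      rw [(Matrix.scalar_commute (X : ℂ[X]) (fun r' => Commute.all _ _) _).eq]
      rw [← mul_assoc, ← _root_.map_mul ((C : ℂ →+* ℂ[X]).mapMatrix) U V, hUV, _root_.map_one, one_mul]
    · rw [← _root_.map_mul, ← _root_.map_mul, mul_assoc]
  rw [Matrix.charpoly, key, det_mul, det_mul, mul_comm, ← mul_assoc, ← det_mul,
    ← _root_.map_mul ((C : ℂ →+* ℂ[X]).mapMatrix) V U, hVU, _root_.map_one, det_one, one_mul]
  rfl

lemma charpoly_diag (d : Fin n → ℂ) :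
    (Matrix.diagonal d).charpoly = ∏ i, (X - C (d i)) := by
  have h : charmatrix (Matrix.diagonal d) = Matrix.diagonal (fun i => X - C (d i)) := by
    ext i j
    by_cases hij : i = j
    · subst hij; simp [charmatrix_apply_eq]
    · rw [charmatrix_apply_ne _ _ _ hij, Matrix.diagonal_apply_ne _ hij,
        Matrix.diagonal_apply_ne _ hij, map_zero, neg_zero]
  rw [Matrix.charpoly, h, det_diagonal]

lemma charpoly_unitary_diag (U : Matrix (Fin n) (Fin n) ℂ) (hU : U ∈ Matrix.unitaryGroup (Fin n) ℂ)
    (d : Fin n → ℂ) :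
    (U * Matrix.diagonal d * star U).charpoly = ∏ i, (X - C (d i)) := by
  rw [charpoly_conj U _ (star U) (Matrix.mem_unitaryGroup_iff.mp hU)
    (Matrix.mem_unitaryGroup_iff'.mp hU), charpoly_diag]

lemma roots_prod_eq (f : Fin n → ℂ) :
    (∏ i, (X - C (f i))).roots = Multiset.map f Finset.univ.val := by
  have h : ∏ i, (X - C (f i))
      = (Multiset.map (fun a => X - C a) (Multiset.map f Finset.univ.val)).prod := by
    rw [Multiset.map_map]; rfl
  rw [h, Polynomial.roots_multiset_prod_X_sub_C]

lemma multiset_real_of_complex {f g : Fin n → ℝ}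
    (h : Multiset.map (fun i => ((f i : ℝ) : ℂ)) Finset.univ.val
       = Multiset.map (fun i => ((g i : ℝ) : ℂ)) Finset.univ.val) :
    Multiset.map f Finset.univ.val = Multiset.map g Finset.univ.val := by
  apply Multiset.map_injective (f := (Complex.ofReal)) Complex.ofReal_injective
  rw [Multiset.map_map, Multiset.map_map]
  exact h

section herm
variable {A : Matrix (Fin n) (Fin n) ℂ} (hA : A.IsHermitian)

lemma herm_charpoly : A.charpoly = ∏ i, (X - C ((hA.eigenvalues i : ℝ) : ℂ)) := by
  conv_lhs => rw [hA.spectral_theorem]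
  exact charpoly_unitary_diag _ (hA.eigenvectorUnitary).2 _

lemma herm_sq_charpoly : (A * A).charpoly = ∏ i, (X - C (((hA.eigenvalues i : ℝ) : ℂ)^2)) := by
  have hU : star (hA.eigenvectorUnitary : Matrix (Fin n) (Fin n) ℂ)
      * (hA.eigenvectorUnitary : Matrix (Fin n) (Fin n) ℂ) = 1 :=
    Matrix.mem_unitaryGroup_iff'.mp (hA.eigenvectorUnitary).2
  have h : A * A = (hA.eigenvectorUnitary : Matrix (Fin n) (Fin n) ℂ)
      * Matrix.diagonal (fun i => ((hA.eigenvalues i : ℝ) : ℂ)^2)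
      * star (hA.eigenvectorUnitary : Matrix (Fin n) (Fin n) ℂ) := by
    conv_lhs => rw [hA.spectral_theorem, Unitary.conjStarAlgAut_apply]
    rw [show ∀ (W d₁ : Matrix (Fin n) (Fin n) ℂ), (W * d₁ * star W) * (W * d₁ * star W)
        = W * (d₁ * (star W * W) * d₁) * star W from fun W d₁ => by
      simp only [Matrix.mul_assoc]]
    rw [hU, Matrix.mul_one, Matrix.diagonal_mul_diagonal]
    congr 1
    · congr 1
      ext i
      simp [Function.comp, sq]
  rw [h]
  exact charpoly_unitary_diag _ (hA.eigenvectorUnitary).2 _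

lemma herm_sub_sq_charpoly : (A - A * A).charpoly
    = ∏ i, (X - C (((hA.eigenvalues i : ℝ) : ℂ) - ((hA.eigenvalues i : ℝ) : ℂ)^2)) := by
  have hU : star (hA.eigenvectorUnitary : Matrix (Fin n) (Fin n) ℂ)
      * (hA.eigenvectorUnitary : Matrix (Fin n) (Fin n) ℂ) = 1 :=
    Matrix.mem_unitaryGroup_iff'.mp (hA.eigenvectorUnitary).2
  have h : A - A * A = (hA.eigenvectorUnitary : Matrix (Fin n) (Fin n) ℂ)
      * Matrix.diagonal (fun i => ((hA.eigenvalues i : ℝ) : ℂ) - ((hA.eigenvalues i : ℝ) : ℂ)^2)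
      * star (hA.eigenvectorUnitary : Matrix (Fin n) (Fin n) ℂ) := by
    conv_lhs => rw [hA.spectral_theorem, Unitary.conjStarAlgAut_apply]
    rw [show ∀ (W d₁ : Matrix (Fin n) (Fin n) ℂ), (W * d₁ * star W) * (W * d₁ * star W)
        = W * (d₁ * (star W * W) * d₁) * star W from fun W d₁ => by
      simp only [Matrix.mul_assoc]]
    rw [hU, Matrix.mul_one, Matrix.diagonal_mul_diagonal]
    rw [← Matrix.sub_mul, ← Matrix.mul_sub, Matrix.diagonal_sub]
    congr 2
    ext i
    simp [Function.comp, sq]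
  rw [h]
  exact charpoly_unitary_diag _ (hA.eigenvectorUnitary).2 _

lemma herm_neg_charpoly : (-A).charpoly = ∏ i, (X - C (-((hA.eigenvalues i : ℝ) : ℂ))) := by
  have h : -A = (hA.eigenvectorUnitary : Matrix (Fin n) (Fin n) ℂ)
      * Matrix.diagonal (fun i => -((hA.eigenvalues i : ℝ) : ℂ))
      * star (hA.eigenvectorUnitary : Matrix (Fin n) (Fin n) ℂ) := by
    conv_lhs => rw [hA.spectral_theorem]
    rw [← Matrix.diagonal_neg]
    simp only [Matrix.neg_mul, Matrix.mul_neg]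
    rfl
  rw [h]
  exact charpoly_unitary_diag _ (hA.eigenvectorUnitary).2 _

end herm

lemma pinching_sq (C : Matrix (Fin n) (Fin n) ℂ) (A : Finset (Fin n)) (hproj : C * C = C) :
    (C - pinching C A) * (C - pinching C A) = pinching C A - pinching C A * pinching C A := by
  have hC : ∀ j k, C j k = ∑ l, C j l * C l k := by
    intro j k; rw [← Matrix.mul_apply, hproj]
  have key : ∀ j k, (∑ l, (C j l - pinching C A j l) * (C l k - pinching C A l k))
      + (∑ l, pinching C A j l * pinching C A l k) = pinching C A j k := by
    intro j k
    rw [← Finset.sum_add_distrib]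
    have hP : pinching C A j k = ∑ l, (if (j ∈ A ↔ k ∈ A) then C j l * C l k else 0) := by
      by_cases h : (j ∈ A ↔ k ∈ A)
      · simp only [pinching, Matrix.of_apply, if_pos h]; exact hC j k
      · simp only [pinching, Matrix.of_apply, if_neg h, Finset.sum_const_zero]
    rw [hP]
    apply Finset.sum_congr rfl
    intro l _
    by_cases hj : j ∈ A <;> by_cases hk : k ∈ A <;> by_cases hl : l ∈ A <;>
      simp [pinching, hj, hk, hl] <;> ring
  ext j k
  simp only [Matrix.mul_apply, Matrix.sub_apply]
  rw [eq_sub_iff_add_eq]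
  exact key j k

lemma conj_sign (C : Matrix (Fin n) (Fin n) ℂ) (A : Finset (Fin n)) :
    Matrix.diagonal (fun i => if i ∈ A then (1:ℂ) else -1) * (C - pinching C A)
      * Matrix.diagonal (fun i => if i ∈ A then (1:ℂ) else -1) = -(C - pinching C A) := by
  ext j k
  rw [Matrix.mul_diagonal, Matrix.diagonal_mul, Matrix.neg_apply]
  by_cases hj : j ∈ A <;> by_cases hk : k ∈ A <;>
    simp [pinching, hj, hk, Matrix.sub_apply] <;> ring

lemma sign_sq (A : Finset (Fin n)) :
    Matrix.diagonal (fun i => if i ∈ A then (1:ℂ) else -1)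
      * Matrix.diagonal (fun i => if i ∈ A then (1:ℂ) else -1) = 1 := by
  rw [Matrix.diagonal_mul_diagonal]
  ext i j
  by_cases hij : i = j
  · subst hij; by_cases hi : i ∈ A <;> simp [hi, Matrix.one_apply]
  · simp [Matrix.diagonal_apply_ne _ hij, Matrix.one_apply_ne hij]

lemma eig_sub_sq_eq_sq {Dm Mm : Matrix (Fin n) (Fin n) ℂ} (hD : Dm.IsHermitian)
    (hM : Mm.IsHermitian) (h : Dm - Dm * Dm = Mm * Mm) :
    Multiset.map (fun i => hD.eigenvalues i - hD.eigenvalues i ^ 2) Finset.univ.val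
      = Multiset.map (fun i => hM.eigenvalues i ^ 2) Finset.univ.val := by
  apply multiset_real_of_complex
  have h1 := herm_sub_sq_charpoly hD
  rw [h, herm_sq_charpoly hM] at h1
  have h3 := congrArg Polynomial.roots h1
  rw [roots_prod_eq (fun i => ((hM.eigenvalues i : ℝ):ℂ)^2),
    roots_prod_eq (fun i => ((hD.eigenvalues i : ℝ):ℂ) - ((hD.eigenvalues i : ℝ):ℂ)^2)] at h3
  have e1 : (fun i => ((hD.eigenvalues i - hD.eigenvalues i ^ 2 : ℝ):ℂ))
      = fun i => ((hD.eigenvalues i : ℝ):ℂ) - ((hD.eigenvalues i : ℝ):ℂ)^2 := by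
    funext i; push_cast; ring
  have e2 : (fun i => ((hM.eigenvalues i ^ 2 : ℝ):ℂ))
      = fun i => ((hM.eigenvalues i : ℝ):ℂ)^2 := by
    funext i; push_cast; ring
  rw [e1, e2]
  exact h3.symm

lemma eig_symm {Mm : Matrix (Fin n) (Fin n) ℂ} (hM : Mm.IsHermitian)
    (U : Matrix (Fin n) (Fin n) ℂ) (hU2 : U * U = 1) (hanti : U * Mm * U = -Mm) :
    Multiset.map hM.eigenvalues Finset.univ.val
      = Multiset.map (fun i => -hM.eigenvalues i) Finset.univ.val := by
  apply multiset_real_of_complex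
  have h2 := herm_neg_charpoly hM
  have hcon : (-Mm).charpoly = Mm.charpoly := by
    rw [← hanti]; exact charpoly_conj U Mm U hU2 hU2
  rw [hcon, herm_charpoly hM] at h2
  have h3 := congrArg Polynomial.roots h2
  rw [roots_prod_eq (fun i => ((hM.eigenvalues i : ℝ):ℂ)),
    roots_prod_eq (fun i => -((hM.eigenvalues i : ℝ):ℂ))] at h3
  have e2 : (fun i => ((-hM.eigenvalues i : ℝ):ℂ)) = fun i => -((hM.eigenvalues i : ℝ):ℂ) := by
    funext i; push_cast; ring
  rw [e2]
  exact h3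

lemma sum_eq_of_multiset_eq {f g : Fin n → ℝ}
    (h : Multiset.map f Finset.univ.val = Multiset.map g Finset.univ.val) (F : ℝ → ℝ) :
    ∑ i, F (f i) = ∑ i, F (g i) := by
  have h2 : Multiset.map (F ∘ f) Finset.univ.val = Multiset.map (F ∘ g) Finset.univ.val := by
    rw [← Multiset.map_map, ← Multiset.map_map, h]
  have e1 : ∑ i, F (f i) = (Multiset.map (F ∘ f) Finset.univ.val).sum := rfl
  have e2 : ∑ i, F (g i) = (Multiset.map (F ∘ g) Finset.univ.val).sum := rfl
  rw [e1, e2, h2]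

lemma sum_even_of_symm {f : Fin n → ℝ}
    (hsym : Multiset.map f Finset.univ.val = Multiset.map (fun i => -f i) Finset.univ.val)
    (Φ Ψ : ℝ → ℝ) (heven : ∀ x, Φ (-x) = Φ x) (h0 : Φ 0 = 0)
    (hΨ : ∀ x, Ψ x = if 0 < x then Φ x else 0) :
    ∑ i, Φ (f i) = 2 * ∑ i, Ψ (f i) := by
  have hpt : ∀ x, Φ x = Ψ x + Ψ (-x) := by
    intro x
    rcases lt_trichotomy 0 x with h | h | h
    · rw [hΨ x, hΨ (-x), if_pos h, if_neg (by linarith)]; ring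
    · rw [← h, neg_zero, hΨ 0, if_neg (lt_irrefl 0), h0]; ring
    · rw [hΨ x, hΨ (-x), if_neg (by linarith), if_pos (by linarith), heven]; ring
  calc ∑ i, Φ (f i) = ∑ i, (Ψ (f i) + Ψ (-f i)) := by
        exact Finset.sum_congr rfl fun i _ => hpt (f i)
  _ = ∑ i, Ψ (f i) + ∑ i, Ψ (-f i) := Finset.sum_add_distrib
  _ = 2 * ∑ i, Ψ (f i) := by
        rw [show ∑ i, Ψ (-f i) = ∑ i, Ψ (f i) from (sum_eq_of_multiset_eq hsym Ψ).symm]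
        ring

theorem entropy_area_law_bound {L : ℕ}
    (C : Matrix (Fin (2 * L)) (Fin (2 * L)) ℂ) (hC : C.IsHermitian)
    (hproj : C * C = C)
    (hrank : (Finset.univ.filter (fun i => hC.eigenvalues i = 1)).card = L)
    (heig : ∀ i, hC.eigenvalues i = 0 ∨ hC.eigenvalues i = 1)
    (A : Finset (Fin (2 * L)))
    (D M : Matrix (Fin (2 * L)) (Fin (2 * L)) ℂ)
    (hD : D = pinching C A) (hM : M = C - D)
    (hDh : D.IsHermitian) (hMh : M.IsHermitian)
    (lam : Fin (2 * L) → ℝ) (hlam : IsSortedEigenvalues hMh lam)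
    (c β : ℝ) (hc : 1 < c) (hβ : 2 < β)
    (hdecay : ∀ j : Fin (2 * L), lam j ≤ c * ((j : ℕ) + 1 : ℝ) ^ (1 - β)) :
    Summable (fun j : ℕ => binEnt (min (c * ((j + 1 : ℝ)) ^ (1 - β)) (1 / 2))) ∧
    ∑ j, binEnt (hDh.eigenvalues j) ≤
      8 * c * ∑' j : ℕ, binEnt (min (c * ((j + 1 : ℝ)) ^ (1 - β)) (1 / 2)) := by
  classical
  have hc0 : (0:ℝ) < c := by linarith
  have hsummable := summable_binEnt hc0 hβ
  refine ⟨hsummable, ?_⟩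
  subst hD
  subst hM
  set ξ := hDh.eigenvalues with hξdef
  set lamE := hMh.eigenvalues with hlamEdef
  obtain ⟨hanti, σ, hlam_eq⟩ := hlam
  -- key matrix identity and symmetry
  have hDD : pinching C A - pinching C A * pinching C A
      = (C - pinching C A) * (C - pinching C A) := (pinching_sq C A hproj).symm
  have hmu := eig_sub_sq_eq_sq hDh hMh hDD
  have hsym := eig_symm hMh _ (sign_sq A) (conj_sign C A)
  -- the comparison functions
  set G : ℝ → ℝ := fun u => binEnt (min (2*u) (1/2)) with hGdef
  set Φ : ℝ → ℝ := fun x => G (x^2) with hΦdef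
  set Ψ : ℝ → ℝ := fun x => if 0 < x then Φ x else 0 with hΨdef
  -- eigenvalues of D are in [0,1]
  have hmem : ∀ j, ∃ k, ξ j - ξ j^2 = lamE k^2 := by
    intro j
    have hj : ξ j - ξ j ^ 2 ∈ Multiset.map (fun i => lamE i ^ 2) Finset.univ.val := by
      rw [← hmu]
      exact Multiset.mem_map_of_mem _ (Finset.mem_univ j)
    obtain ⟨k, _, hk⟩ := Multiset.mem_map.mp hj
    exact ⟨k, hk.symm⟩
  have hξ01 : ∀ j, 0 ≤ ξ j ∧ ξ j ≤ 1 := by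
    intro j
    obtain ⟨k, hk⟩ := hmem j
    have h1 : 0 ≤ ξ j - ξ j^2 := hk ▸ sq_nonneg (lamE k)
    constructor <;> nlinarith
  -- pointwise entropy bound
  have step2 : ∀ j, binEnt (ξ j) ≤ G (ξ j - ξ j ^ 2) := by
    intro j
    obtain ⟨h0, h1⟩ := hξ01 j
    have hbm : binEnt (ξ j) = binEnt (min (ξ j) (1 - ξ j)) := by
      rcases le_total (ξ j) (1 - ξ j) with h | h
      · rw [min_eq_left h]
      · rw [min_eq_right h, binEnt_one_sub]
    have hm0 : 0 ≤ min (ξ j) (1 - ξ j) := le_min h0 (by linarith)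
    have hm2 : min (ξ j) (1 - ξ j) ≤ 1/2 := by
      rcases le_total (ξ j) (1 - ξ j) with h | h
      · rw [min_eq_left h]; linarith
      · rw [min_eq_right h]; linarith
    have hmu' : min (ξ j) (1 - ξ j) ≤ 2 * (ξ j - ξ j^2) := by
      rcases le_total (ξ j) (1 - ξ j) with h | h
      · rw [min_eq_left h]; nlinarith
      · rw [min_eq_right h]; nlinarith
    rw [hbm]
    exact binEnt_mono hm0 (le_min hmu' hm2) (min_le_right _ _)
  have step3 : ∑ j, binEnt (ξ j) ≤ ∑ j, G (ξ j - ξ j ^ 2) :=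
    Finset.sum_le_sum fun j _ => step2 j
  have step4 : ∑ j, G (ξ j - ξ j ^ 2) = ∑ j, G (lamE j ^ 2) :=
    sum_eq_of_multiset_eq hmu G
  have step6 : ∑ j, Φ (lamE j) = 2 * ∑ j, Ψ (lamE j) := by
    refine sum_even_of_symm hsym Φ Ψ (fun x => by rw [hΦdef]; simp [neg_sq]) ?_ (fun x => rfl)
    rw [hΦdef]
    show G (0^2) = 0
    rw [hGdef]
    norm_num [binEnt_zero]
  have step7 : ∑ j, Ψ (lamE j) = ∑ j, Ψ (lam j) := by
    rw [hlam_eq]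
    exact (Equiv.sum_comp σ (fun i => Ψ (lamE i))).symm
  have step8 : ∑ j, Ψ (lam j)
      ≤ ∑ j : Fin (2*L), (4*c) * binEnt (min (c * (((j:ℕ):ℝ)+1) ^ (1-β)) (1/2)) := by
    apply Finset.sum_le_sum
    intro j _
    by_cases hpos : 0 < lam j
    · have hr0 : (0:ℝ) < (((j:ℕ):ℝ)+1) ^ (1-β) :=
        Real.rpow_pos_of_pos (by positivity) _
      have hr1 : (((j:ℕ):ℝ)+1) ^ (1-β) ≤ 1 := by
        apply Real.rpow_le_one_of_one_le_of_nonpos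
        · have : (0:ℝ) ≤ ((j:ℕ):ℝ) := Nat.cast_nonneg _
          linarith
        · linarith
      have := key_pointwise hc hr0 hr1 hpos.le (hdecay j)
      rw [hΨdef]
      simp only [if_pos hpos]
      exact this
    · rw [hΨdef]
      simp only [if_neg hpos]
      apply mul_nonneg (by linarith)
      apply binEnt_nonneg
      · exact le_min (mul_nonneg hc0.le (Real.rpow_nonneg (by positivity) _)) (by norm_num)
      · calc min (c * (((j:ℕ):ℝ)+1) ^ (1-β)) (1/2) ≤ 1/2 := min_le_right _ _
        _ ≤ 1 := by norm_num
  have step9 : ∑ j : Fin (2*L), binEnt (min (c * (((j:ℕ):ℝ)+1) ^ (1-β)) (1/2))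
      ≤ ∑' k : ℕ, binEnt (min (c * ((k:ℝ)+1) ^ (1-β)) (1/2)) := by
    rw [Fin.sum_univ_eq_sum_range (fun k => binEnt (min (c * ((k:ℝ)+1) ^ (1-β)) (1/2)))]
    apply Summable.sum_le_tsum
    · intro i _
      apply binEnt_nonneg
      · exact le_min (mul_nonneg hc0.le (Real.rpow_nonneg (by positivity) _)) (by norm_num)
      · calc min (c * ((i:ℝ)+1) ^ (1-β)) (1/2) ≤ 1/2 := min_le_right _ _
        _ ≤ 1 := by norm_num
    · exact hsummable
  calc ∑ j, binEnt (ξ j) ≤ ∑ j, G (ξ j - ξ j ^ 2) := step3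
  _ = ∑ j, Φ (lamE j) := step4
  _ = 2 * ∑ j, Ψ (lamE j) := step6
  _ = 2 * ∑ j, Ψ (lam j) := by rw [step7]
  _ ≤ 2 * ∑ j : Fin (2*L), (4*c) * binEnt (min (c * (((j:ℕ):ℝ)+1) ^ (1-β)) (1/2)) := by
      linarith [step8]
  _ = 8 * c * ∑ j : Fin (2*L), binEnt (min (c * (((j:ℕ):ℝ)+1) ^ (1-β)) (1/2)) := by
      rw [← Finset.mul_sum]; ring
  _ ≤ 8 * c * ∑' k : ℕ, binEnt (min (c * ((k:ℝ)+1) ^ (1-β)) (1/2)) := by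
      apply mul_le_mul_of_nonneg_left step9 (by linarith)
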